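/- In the semigroup S on {γ_k : k ∈ ℕ⁺} ∪ {δ_k : k ∈ ℕ⁺} with multiplication γ_{k₁}γ_{k₂} = γ_{k₁}δ_{k₂} = γ_{k₁k₂} and δ_{k₁}γ_{k₂} = δ_{k₁}δ_{k₂} = δ_{k₁k₂}, Green's relation 𝓛 satisfies: γ_{k₁}𝓛γ_{k₂} iff k₁ = k₂; δ_{k₁}𝓛δ_{k₂} iff k₁ = k₂; and γ_{k₁}𝓛δ_{k₂} iff k₁ = k₂. -/
import Mathlib


/-- The abstract semigroup on two copies of the positive integers. -/
inductive GD
  | g : ℕ+ → GD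
  | d : ℕ+ → GD
deriving DecidableEq

/-- Multiplication: `γ_{k₁}γ_{k₂} = γ_{k₁}δ_{k₂} = γ_{k₁k₂}`, `δ_{k₁}γ_{k₂} = δ_{k₁}δ_{k₂} = δ_{k₁k₂}`. -/
def GD.mul : GD → GD → GD
  | GD.g k, GD.g m => GD.g (k * m)
  | GD.g k, GD.d m => GD.g (k * m)
  | GD.d k, GD.g m => GD.d (k * m)
  | GD.d k, GD.d m => GD.d (k * m)

/-- `aS¹ = {a} ∪ aS`. -/
def rIdeal (a : GD) : Set GD := insert a {x : GD | ∃ s : GD, x = GD.mul a s}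

/-- `S¹a = {a} ∪ Sa`. -/
def lIdeal (a : GD) : Set GD := insert a {x : GD | ∃ s : GD, x = GD.mul s a}

/-- `S¹aS¹`. -/
def jIdeal (a : GD) : Set GD :=
  {x : GD | x = a ∨ (∃ s : GD, x = GD.mul a s) ∨ (∃ s : GD, x = GD.mul s a) ∨ (∃ s t : GD, x = GD.mul (GD.mul s a) t)}

/-- Green's relation `𝓡`. -/
def rRel (a b : GD) : Prop := rIdeal a = rIdeal b

/-- Green's relation `𝓛`. -/
def lRel (a b : GD) : Prop := lIdeal a = lIdeal b

/-- Green's relation `𝓓 = 𝓛 ∘ 𝓡`. -/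
def dRel (a b : GD) : Prop := ∃ c, lRel a c ∧ rRel c b

/-- Green's relation `𝓙`. -/
def jRel (a b : GD) : Prop := jIdeal a = jIdeal b

/-- Index of an element. -/
def GD.idx : GD → ℕ+
  | GD.g k => k
  | GD.d k => k

lemma idx_mem_dvd {a x : GD} (h : x ∈ lIdeal a) : a.idx ∣ x.idx := by
  rcases h with h | ⟨s, rfl⟩
  · subst h; exact dvd_rfl
  · cases s <;> cases a <;> exact dvd_mul_left _ _

lemma dvd_of_lRel {a b : GD} (h : lRel a b) : b.idx ∣ a.idx :=
  idx_mem_dvd (h ▸ Set.mem_insert a _)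

lemma idx_eq_of_lRel {a b : GD} (h : lRel a b) : a.idx = b.idx := by
  have h1 := dvd_of_lRel h
  have h2 := dvd_of_lRel (h.symm : lRel b a)
  exact PNat.coe_injective (Nat.dvd_antisymm (PNat.dvd_iff.mp h2) (PNat.dvd_iff.mp h1))

lemma mul_g_eq_mul_d (s : GD) (k : ℕ+) : GD.mul s (GD.g k) = GD.mul s (GD.d k) := by
  cases s <;> rfl

lemma lIdeal_g_eq_d (k : ℕ+) : lIdeal (GD.g k) = lIdeal (GD.d k) := by
  ext x
  constructor
  · rintro (rfl | ⟨s, rfl⟩)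
    · exact Or.inr ⟨GD.g 1, by simp [GD.mul]⟩
    · exact Or.inr ⟨s, mul_g_eq_mul_d s k⟩
  · rintro (rfl | ⟨s, rfl⟩)
    · exact Or.inr ⟨GD.d 1, by simp [GD.mul]⟩
    · exact Or.inr ⟨s, (mul_g_eq_mul_d s k).symm⟩

/-- Green's relation `𝓛` on `S`. -/
theorem stmt16 :
    (∀ k₁ k₂ : ℕ+, lRel (GD.g k₁) (GD.g k₂) ↔ k₁ = k₂) ∧
    (∀ k₁ k₂ : ℕ+, lRel (GD.d k₁) (GD.d k₂) ↔ k₁ = k₂) ∧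
    (∀ k₁ k₂ : ℕ+, lRel (GD.g k₁) (GD.d k₂) ↔ k₁ = k₂) := by
  refine ⟨fun k₁ k₂ => ⟨fun h => idx_eq_of_lRel h, fun h => by rw [h]; rfl⟩,
    fun k₁ k₂ => ⟨fun h => idx_eq_of_lRel h, fun h => by rw [h]; rfl⟩,
    fun k₁ k₂ => ⟨fun h => idx_eq_of_lRel h, fun h => by rw [h]; exact lIdeal_g_eq_d k₂⟩⟩
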